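/- Let g ≥ 2 and let A be an abelian group. Suppose there is an exact sequence of abelian groups 0 → ℤ^{2g} →ⁱ ℤ × A →ʲ ℤ^{22} →^δ ℤ^{2g} × ℤ/(2g−2)ℤ →^q ℤ^{2g} → 0. Then A is a free abelian group of rank 21 + 2g, and the image of j is a subgroup of index 2g−2 in ℤ^{22}. -/

import Mathlib

/-!
STATEMENT 6: Let `g ≥ 2` and let `A` be an abelian group.  Suppose there is an
exact sequence of abelian groups
`0 → ℤ^{2g} →ⁱ ℤ × A →ʲ ℤ²² →^δ ℤ^{2g} × ℤ/(2g−2)ℤ →^q ℤ^{2g} → 0`.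
Then `A` is free abelian of rank `21 + 2g`, and the image of `j` is a subgroup
of index `2g − 2` in `ℤ²²`.
-/

theorem cap_homology_computation (g : ℕ) (hg : 2 ≤ g)
    (A : Type) [AddCommGroup A]
    (i : (Fin (2 * g) → ℤ) →+ ℤ × A)
    (j : ℤ × A →+ (Fin 22 → ℤ))
    (δ : (Fin 22 → ℤ) →+ (Fin (2 * g) → ℤ) × ZMod (2 * g - 2))
    (q : ((Fin (2 * g) → ℤ) × ZMod (2 * g - 2)) →+ (Fin (2 * g) → ℤ))
    (hi : Function.Injective i)
    (hij : i.range = j.ker)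
    (hjδ : j.range = δ.ker)
    (hδq : δ.range = q.ker)
    (hq : Function.Surjective q) :
    Nonempty (A ≃+ (Fin (21 + 2 * g) → ℤ)) ∧ j.range.index = 2 * g - 2 := by
  have hnpos : 0 < 2 * g - 2 := by omega
  -- ### Analysis of `ker q`
  have tf : ∀ (y : Fin (2*g) → ℤ), (2*g-2) • y = 0 → y = 0 := by
    intro y hy
    have h2 : ((2*g-2 : ℕ) : ℤ) • y = 0 := by rwa [Nat.cast_smul_eq_nsmul]
    rcases smul_eq_zero.mp h2 with h | h
    · exfalso; have : ((2*g-2:ℕ):ℤ) ≠ 0 := by exact_mod_cast hnpos.ne'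
      exact this h
    · exact h
  have prod0 : ∀ b : ZMod (2*g-2),
      (2*g-2) • (((0 : Fin (2*g) → ℤ), b) : (Fin (2*g) → ℤ) × ZMod (2*g-2)) = 0 := by
    intro b
    apply Prod.ext
    · simp
    · show (2*g-2) • b = 0
      rw [nsmul_eq_mul, ZMod.natCast_self, zero_mul]
  have q0 : ∀ b : ZMod (2*g-2), q (0, b) = 0 := by
    intro b
    apply tf
    rw [← map_nsmul, prod0, map_zero]
  set F : (Fin (2*g) → ℤ) →ₗ[ℤ] (Fin (2*g) → ℤ) :=
    q.toIntLinearMap ∘ₗ LinearMap.inl ℤ _ _ with hF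
  have hqF : ∀ (a : Fin (2*g) → ℤ) (b : ZMod (2*g-2)), q (a, b) = F a := by
    intro a b
    have h1 : (a, b) = ((a, 0) : (Fin (2*g) → ℤ) × ZMod (2*g-2)) + (0, b) := by simp
    rw [h1, map_add, q0, add_zero]; rfl
  have hFsurj : Function.Surjective F := by
    intro y; obtain ⟨⟨a, b⟩, hx⟩ := hq y; exact ⟨a, by rw [← hqF a b, hx]⟩
  have hFinj : Function.Injective F :=
    OrzechProperty.injective_of_surjective_endomorphism F hFsurj
  have hkerq : ∀ x : (Fin (2*g) → ℤ) × ZMod (2*g-2), q x = 0 → x.1 = 0 := by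
    rintro ⟨a, b⟩ h
    rw [hqF a b] at h
    exact hFinj (by rw [h, map_zero])
  -- ### The index computation
  have hcard : Nat.card q.ker = 2 * g - 2 := by
    have e : q.ker ≃ ZMod (2*g-2) :=
      { toFun := fun x => x.1.2
        invFun := fun b => ⟨(0, b), by simp [AddMonoidHom.mem_ker, q0]⟩
        left_inv := by
          rintro ⟨⟨a, b⟩, hx⟩
          have : a = 0 := hkerq _ hx
          simp [this]
        right_inv := fun b => rfl }
    rw [Nat.card_congr e, Nat.card_zmod]
  have hindex : j.range.index = 2 * g - 2 := by
    rw [hjδ, AddSubgroup.index_ker, hδq, hcard]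
  refine ⟨?_, hindex⟩
  -- ### `(2g-2) • x` is always in the range of `j`
  have hsmul : ∀ x : Fin 22 → ℤ, ∃ y, j y = (2*g-2 : ℕ) • x := by
    intro x
    have h1 : δ x ∈ q.ker := by
      rw [← hδq]; exact ⟨x, rfl⟩
    have h2 : (δ x).1 = 0 := hkerq _ h1
    have h3 : δ ((2*g-2) • x) = 0 := by
      rw [map_nsmul]
      have : δ x = ((0 : Fin (2*g) → ℤ), (δ x).2) := by
        rw [← h2]
      rw [this, prod0]
    have h4 : (2*g-2) • x ∈ j.range := by rw [hjδ]; exact h3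
    exact h4
  -- ### Freeness of `A`
  set i' := i.toIntLinearMap with hi'
  set j' := j.toIntLinearMap with hj'
  have hker : LinearMap.ker j' = LinearMap.range i' := by
    ext x
    have h := SetLike.ext_iff.mp hij x
    exact h.symm
  -- torsion freeness of A
  have hA_tf : NoZeroSMulDivisors ℤ A := by
    refine ⟨fun {c a} h => ?_⟩
    by_cases hc : c = 0
    · exact Or.inl hc
    refine Or.inr ?_
    have hx : c • ((0 : ℤ), a) = 0 := by
      apply Prod.ext <;> simp [h]
    have hj0 : j ((0 : ℤ), a) = 0 := by
      have h1 : c • j ((0:ℤ), a) = 0 := by rw [← map_zsmul, hx, map_zero]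
      rcases smul_eq_zero.mp h1 with h' | h'
      · exact absurd h' hc
      · exact h'
    have hmem : ((0:ℤ), a) ∈ i.range := by rw [hij]; exact hj0
    obtain ⟨y, hy⟩ := hmem
    have hy0 : y = 0 := by
      have h1 : i (c • y) = 0 := by rw [map_zsmul, hy, hx]
      have h2 : c • y = 0 := hi (by rw [h1, map_zero])
      rcases smul_eq_zero.mp h2 with h' | h'
      · exact absurd h' hc
      · exact h'
    have : ((0:ℤ), a) = 0 := by rw [← hy, hy0, map_zero]
    exact congrArg Prod.snd this
  -- finiteness of ℤ × A
  have hfin : Module.Finite ℤ (ℤ × A) := by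
    constructor
    apply Submodule.fg_of_fg_map_of_fg_inf_ker j'
    · exact IsNoetherian.noetherian _
    · rw [top_inf_eq, hker, LinearMap.range_eq_map]
      exact (IsNoetherian.noetherian _).map i'
  have hfinA : Module.Finite ℤ A :=
    Module.Finite.of_surjective (LinearMap.snd ℤ ℤ A) Prod.snd_surjective
  have hfree : Module.Free ℤ A := Module.free_of_finite_type_torsion_free'
  -- range j' is free and finite
  have hfinR : Module.Finite ℤ (LinearMap.range j') :=
    Module.Finite.iff_fg.mpr (IsNoetherian.noetherian _)
  have hfreeR : Module.Free ℤ (LinearMap.range j') :=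
    Module.free_of_finite_type_torsion_free'
  -- splitting of the sequence 0 → ℤ^{2g} → ℤ × A → range j → 0
  set g0 := j'.rangeRestrict with hg0
  have hexact : Function.Exact i' g0 := by
    rw [LinearMap.exact_iff, LinearMap.ker_rangeRestrict, hker]
  obtain ⟨s, hs⟩ := Module.projective_lifting_property g0 LinearMap.id
    j'.surjective_rangeRestrict
  have hi'' : Function.Injective i' := hi
  obtain ⟨e, -⟩ := hexact.splitSurjectiveEquiv hi'' ⟨s, hs⟩
  -- finrank computations
  have hrankR : Module.finrank ℤ (LinearMap.range j') = 22 := by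
    apply le_antisymm
    · simpa [Module.finrank_fin_fun] using LinearMap.finrank_le_finrank_of_injective
        (f := (LinearMap.range j').subtype) Subtype.val_injective
    · have hmem : ∀ x : Fin 22 → ℤ, ((2*g-2 : ℕ) : ℤ) • x ∈ LinearMap.range j' := by
        intro x
        obtain ⟨y, hy⟩ := hsmul x
        exact ⟨y, by show j y = _; rw [hy, Nat.cast_smul_eq_nsmul]⟩
      set φ : (Fin 22 → ℤ) →ₗ[ℤ] LinearMap.range j' :=
        LinearMap.codRestrict _ (((2*g-2 : ℕ) : ℤ) • LinearMap.id) hmem with hφdef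
      have hφ : Function.Injective φ := by
        intro x y hxy
        have h1 : ((2*g-2 : ℕ) : ℤ) • x = ((2*g-2 : ℕ) : ℤ) • y := by
          have := congrArg Subtype.val hxy
          simpa [hφdef] using this
        have hnz : ((2*g-2:ℕ) : ℤ) ≠ 0 := by
          have : (2*g-2 : ℕ) ≠ 0 := by omega
          exact_mod_cast this
        exact smul_right_injective _ hnz h1
      have h2 := LinearMap.finrank_le_finrank_of_injective hφ
      simpa [Module.finrank_fin_fun] using h2
  have hrank : Module.finrank ℤ A = 21 + 2 * g := by
    have h1 : Module.finrank ℤ (ℤ × A) =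
        Module.finrank ℤ ((Fin (2*g) → ℤ) × LinearMap.range j') := e.finrank_eq
    rw [Module.finrank_prod, Module.finrank_prod, Module.finrank_self,
      Module.finrank_fin_fun, hrankR] at h1
    omega
  exact ⟨((Module.finBasis ℤ A).reindex (finCongr hrank)).equivFun.toAddEquiv⟩
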